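/- arXiv:2304.13171 — 4 statements merged into one kernel-verified Lean document; each statement's English description precedes it below -/
import Mathlib

section
/- Let φ(λ¹, λ²) = (1 − λ¹λ²)/(2 − λ¹ − λ²) on the bidisk. For every M > 0, the one-sided limit as t → 0⁺ of (φ(1 − t, 1 − tM) − 1)/t exists and equals −M/(M + 1). In particular, the directional derivative D_{−(1,M)}φ(1,1) is not constant in M and satisfies −D_{−(1,M)}φ(1,1) = M/(M+1) < 1 for all M > 0, with limit 1 as M → ∞. -/
open Filter

/-- Directional derivatives of φ(λ¹,λ²) = (1 − λ¹λ²)/(2 − λ¹ − λ²) at (1,1) along (1,M). -/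
theorem herve_example_directional_derivatives :
    (∀ M : ℝ, 0 < M →
      Tendsto (fun t : ℝ =>
          ((1 - (1 - (t : ℂ)) * (1 - (t : ℂ) * (M : ℂ))) /
              (2 - (1 - (t : ℂ)) - (1 - (t : ℂ) * (M : ℂ))) - 1) / (t : ℂ))
        (nhdsWithin 0 (Set.Ioi 0)) (nhds (-(M / (M + 1) : ℝ) : ℂ))) ∧
    (¬ ∀ M N : ℝ, 0 < M → 0 < N → M / (M + 1) = N / (N + 1)) ∧
    (∀ M : ℝ, 0 < M → M / (M + 1) < 1) ∧
    Tendsto (fun M : ℝ => M / (M + 1)) atTop (nhds 1) := by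
  refine ⟨?_, ?_, ?_, ?_⟩
  · intro M hM
    have hM1 : (M : ℂ) + 1 ≠ 0 := by
      intro h
      have : (M : ℝ) + 1 = 0 := by exact_mod_cast h
      linarith
    have key : ∀ t : ℝ, t ∈ Set.Ioi (0:ℝ) →
        ((1 - (1 - (t : ℂ)) * (1 - (t : ℂ) * (M : ℂ))) /
              (2 - (1 - (t : ℂ)) - (1 - (t : ℂ) * (M : ℂ))) - 1) / (t : ℂ)
          = (-(M / (M + 1) : ℝ) : ℂ) := by
      intro t ht
      have ht0 : (t : ℂ) ≠ 0 := by
        exact_mod_cast ne_of_gt (Set.mem_Ioi.mp ht)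
      have hden : (2 - (1 - (t : ℂ)) - (1 - (t : ℂ) * (M : ℂ))) ≠ 0 := by
        have : (2 - (1 - (t : ℂ)) - (1 - (t : ℂ) * (M : ℂ))) = (t : ℂ) * ((M : ℂ) + 1) := by
          ring
        rw [this]
        exact mul_ne_zero ht0 hM1
      push_cast
      field_simp
      ring
    exact Tendsto.congr' (eventually_nhdsWithin_of_forall fun t ht => (key t ht).symm)
      tendsto_const_nhds
  · intro h
    have := h 1 2 one_pos two_pos
    norm_num at this
  · intro M hM
    rw [div_lt_one (by linarith)]
    linarith
  · have h0 : Tendsto (fun M : ℝ => (M + 1)⁻¹) atTop (nhds 0) :=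
      (tendsto_atTop_add_const_right _ 1 tendsto_id).inv_tendsto_atTop
    have h1 : Tendsto (fun M : ℝ => 1 - (M + 1)⁻¹) atTop (nhds 1) := by
      simpa using (tendsto_const_nhds (x := (1:ℝ))).sub h0
    refine h1.congr' ?_
    filter_upwards [eventually_gt_atTop (0:ℝ)] with M hM
    field_simp
    ring
end

section
/- Let α > 0, M > 0, and let (r_n) be a decreasing sequence of positive reals with r_n → 0. Define R_n = α·max{r_n/(2 − r_n), r_n/(2 − M·r_n)} (for n large enough that 2 − M r_n > 0). Suppose φ : 𝔻² → 𝔻 and ω with |ω| = 1 satisfy |ω − φ(λ_n)| ≤ 2R_n/(R_n + 1) for λ_n = τ − r_n·(τ¹, τ²M) ∈ 𝔻², where τ = (τ¹, τ²) ∈ 𝕋². If M ≥ 1, then limsup_n (1 − |φ(λ_n)|)/(1 − ‖λ_n‖) ≤ α, where ‖λ_n‖ = max{|λ_n¹|, |λ_n²|} = 1 − r_n. -/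
open Filter

/-- Quantitative limsup computation in the proof of the weighted Julia inequality
(Theorem 3.9, (iii) ⇒ (i)), case M ≥ 1. -/
theorem weighted_julia_limsup
    (α M : ℝ) (hα : 0 < α) (hM : 1 ≤ M)
    (r : ℕ → ℝ) (hrpos : ∀ n, 0 < r n) (hrdec : StrictAnti r)
    (hr0 : Tendsto r atTop (nhds 0))
    (τ1 τ2 : ℂ) (hτ1 : ‖τ1‖ = 1) (hτ2 : ‖τ2‖ = 1)
    (ω : ℂ) (hω : ‖ω‖ = 1)
    (φ : ℂ × ℂ → ℂ)
    (hφ : ∀ z : ℂ × ℂ, ‖z.1‖ < 1 → ‖z.2‖ < 1 →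
      ‖φ z‖ < 1)
    (lam : ℕ → ℂ × ℂ)
    (hlam : ∀ n, lam n = (τ1 - (r n : ℂ) * τ1, τ2 - (r n : ℂ) * (τ2 * (M : ℂ))))
    (R : ℕ → ℝ)
    (hR : ∀ n, R n = α * max (r n / (2 - r n)) (r n / (2 - M * r n)))
    (hmem : ∀ᶠ n in atTop,
      ‖(lam n).1‖ < 1 ∧ ‖(lam n).2‖ < 1 ∧ 2 - M * r n > 0)
    (hbound : ∀ᶠ n in atTop, ‖ω - φ (lam n)‖ ≤ 2 * R n / (R n + 1)) :
    Filter.limsup (fun n =>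
        (1 - ‖φ (lam n)‖) /
          (1 - max ‖(lam n).1‖ ‖(lam n).2‖)) atTop ≤ α := by
  have hM0 : (0:ℝ) < M := lt_of_lt_of_le one_pos hM
  set f : ℕ → ℝ := fun n =>
    (1 - ‖φ (lam n)‖) /
      (1 - max ‖(lam n).1‖ ‖(lam n).2‖) with hf
  set g : ℕ → ℝ := fun n => 2 * α / (α * r n + (2 - M * r n)) with hgdef
  -- eventually M * r n < 1
  have hsmall : ∀ᶠ n in atTop, M * r n < 1 := by
    filter_upwards [hr0.eventually_lt_const (show (0:ℝ) < 1 / M by positivity)] with n hn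
    rw [lt_div_iff₀ hM0] at hn; linarith [hn]
  -- key eventual facts
  have hkey : ∀ᶠ n in atTop, f n ≤ g n ∧ 0 ≤ f n := by
    filter_upwards [hmem, hbound, hsmall] with n ⟨h1, h2, h3⟩ hb hs
    have hrn := hrpos n
    have hr1 : r n < 1 := by nlinarith
    -- compute the norms of the coordinates
    have e1 : ‖(lam n).1‖ = 1 - r n := by
      have : (lam n).1 = ((1 - r n : ℝ) : ℂ) * τ1 := by rw [hlam]; push_cast; ring
      rw [this, norm_mul, Complex.norm_real, Real.norm_eq_abs, hτ1, mul_one, abs_of_pos (by linarith)]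
    have e2 : ‖(lam n).2‖ = 1 - M * r n := by
      have : (lam n).2 = ((1 - M * r n : ℝ) : ℂ) * τ2 := by rw [hlam]; push_cast; ring
      rw [this, norm_mul, Complex.norm_real, Real.norm_eq_abs, hτ2, mul_one, abs_of_pos (by linarith)]
    have emax : 1 - max ‖(lam n).1‖ ‖(lam n).2‖ = r n := by
      rw [e1, e2, max_eq_left (by nlinarith)]; ring
    have hphi1 : ‖φ (lam n)‖ < 1 := hφ _ h1 h2
    have hnum : (0:ℝ) ≤ 1 - ‖φ (lam n)‖ := by linarith
    constructor
    · -- f n ≤ g n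
      have hsub : 1 - ‖φ (lam n)‖ ≤ ‖ω - φ (lam n)‖ := by
        have := norm_sub_norm_le ω (φ (lam n))
        simpa [hω] using this
      have hRval : R n = α * (r n / (2 - M * r n)) := by
        rw [hR, max_eq_right]
        gcongr <;> nlinarith
      have hRpos : 0 < R n := by
        rw [hRval]; positivity
      have hstep : f n ≤ 2 * R n / (R n + 1) / r n := by
        rw [hf]; simp only
        rw [emax]
        apply div_le_div_of_nonneg_right (le_trans hsub hb) hrn.le
      refine hstep.trans_eq ?_
      rw [hRval, hgdef]
      have hd : (2 - M * r n) ≠ 0 := ne_of_gt h3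
      have hd2 : α * (r n / (2 - M * r n)) + 1 ≠ 0 := by positivity
      have hd3 : α * r n + (2 - M * r n) ≠ 0 := by positivity
      show 2 * (α * (r n / (2 - M * r n))) / (α * (r n / (2 - M * r n)) + 1) / r n = 2 * α / (α * r n + (2 - M * r n))
      rw [div_div, div_eq_div_iff (mul_ne_zero hd2 hrn.ne') hd3]
      field_simp
      linear_combination mul_inv_cancel₀ hd
    · rw [hf]; simp only; rw [emax]; positivity
  have hco : IsCoboundedUnder (· ≤ ·) atTop f :=
    isCoboundedUnder_le_of_eventually_le atTop (hkey.mono fun n h => h.2)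
  have hg : Tendsto g atTop (nhds α) := by
    have hden : Tendsto (fun n => α * r n + (2 - M * r n)) atTop (nhds 2) := by
      have h := ((hr0.const_mul α).add
        ((tendsto_const_nhds (x := (2:ℝ))).sub (hr0.const_mul M)))
      simpa using h
    have h2' : Tendsto g atTop (nhds (2 * α / 2)) :=
      (tendsto_const_nhds (x := (2*α : ℝ))).div hden (by norm_num)
    convert h2' using 2
    ring
  refine le_of_forall_pos_le_add fun ε hε => ?_
  apply Filter.limsup_le_of_le hco
  filter_upwards [hkey, hg.eventually_le_const (lt_add_of_pos_right α hε)] with n h1 h2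
  exact h1.1.trans h2
end

section
/- Define φ(λ¹, λ²) = −(3λ¹λ² − λ¹ − λ² − 1)/(3 − λ¹ − λ² − λ¹λ²) on the open bidisk 𝔻². Then the denominator never vanishes on 𝔻², φ maps 𝔻² into 𝔻, the slice z ↦ φ(z, 0) equals (z + 1)/(3 − z), and for every M > 0 the limit as t → 0⁺ of (φ(1 − t, 1 − tM) − 1)/t equals −M/(M + 1). -/
open Filter

lemma key_identity (a b : ℂ) :
    Complex.normSq (3 - a - b - a * b) =
      Complex.normSq (-(3 * a * b - a - b - 1)) +
        4 * ((1 - Complex.normSq a) * Complex.normSq (1 - b) +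
          (1 - Complex.normSq b) * Complex.normSq (1 - a)) := by
  simp only [Complex.normSq_apply, Complex.sub_re, Complex.sub_im, Complex.mul_re,
    Complex.mul_im, Complex.neg_re, Complex.neg_im, Complex.one_re, Complex.one_im,
    Complex.re_ofNat, Complex.im_ofNat]
  ring

lemma part1 (l1 l2 : ℂ) (h1 : ‖l1‖ < 1) (h2 : ‖l2‖ < 1) :
    3 - l1 - l2 - l1 * l2 ≠ 0 ∧
      ‖(-(3 * l1 * l2 - l1 - l2 - 1) / (3 - l1 - l2 - l1 * l2))‖ < 1 := by
  have hn1 : Complex.normSq l1 < 1 := by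
    rw [← Complex.sq_norm]
    nlinarith [norm_nonneg l1]
  have hn2 : Complex.normSq l2 < 1 := by
    rw [← Complex.sq_norm]
    nlinarith [norm_nonneg l2]
  have hne1 : l1 ≠ 1 := by
    rintro rfl; simp at h1
  have hpos : 0 < (1 - Complex.normSq l1) * Complex.normSq (1 - l2) +
      (1 - Complex.normSq l2) * Complex.normSq (1 - l1) := by
    have ha : 0 < Complex.normSq (1 - l1) := by
      rw [Complex.normSq_pos, sub_ne_zero]; exact fun h => hne1 h.symm
    have hb : 0 ≤ Complex.normSq (1 - l2) := Complex.normSq_nonneg _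
    nlinarith
  have hlt : Complex.normSq (-(3 * l1 * l2 - l1 - l2 - 1)) <
      Complex.normSq (3 - l1 - l2 - l1 * l2) := by
    rw [key_identity l1 l2]; linarith
  have hD : 3 - l1 - l2 - l1 * l2 ≠ 0 := by
    rw [← Complex.normSq_pos]
    calc (0:ℝ) ≤ Complex.normSq (-(3 * l1 * l2 - l1 - l2 - 1)) := Complex.normSq_nonneg _
      _ < _ := hlt
  refine ⟨hD, ?_⟩
  rw [norm_div, div_lt_one (norm_pos_iff.mpr hD)]
  rw [Complex.norm_def, Complex.norm_def]
  exact Real.sqrt_lt_sqrt (Complex.normSq_nonneg _) hlt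

/-- Example 5.5: φ(λ¹,λ²) = −(3λ¹λ² − λ¹ − λ² − 1)/(3 − λ¹ − λ² − λ¹λ²). -/
theorem sola_tully_example :
    (∀ l1 l2 : ℂ, ‖l1‖ < 1 → ‖l2‖ < 1 →
      (3 - l1 - l2 - l1 * l2 ≠ 0 ∧
        ‖(-(3 * l1 * l2 - l1 - l2 - 1) / (3 - l1 - l2 - l1 * l2))‖ < 1)) ∧
    (∀ z : ℂ, ‖z‖ < 1 →
      -(3 * z * 0 - z - 0 - 1) / (3 - z - 0 - z * 0) = (z + 1) / (3 - z)) ∧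
    (∀ M : ℝ, 0 < M →
      Tendsto (fun t : ℝ =>
          (-(3 * (1 - (t : ℂ)) * (1 - (t : ℂ) * (M : ℂ)) - (1 - (t : ℂ)) -
                (1 - (t : ℂ) * (M : ℂ)) - 1) /
              (3 - (1 - (t : ℂ)) - (1 - (t : ℂ) * (M : ℂ)) -
                (1 - (t : ℂ)) * (1 - (t : ℂ) * (M : ℂ))) - 1) / (t : ℂ))
        (nhdsWithin 0 (Set.Ioi 0)) (nhds (-(M / (M + 1) : ℝ) : ℂ))) := by
  refine ⟨part1, ?_, ?_⟩
  · intro z hz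
    ring_nf
  · intro M hM
    have hM1 : (M : ℂ) + 1 ≠ 0 := by
      have h : ((M + 1 : ℝ) : ℂ) ≠ 0 :=
        Complex.ofReal_ne_zero.mpr (by linarith)
      push_cast at h; exact h
    have h2M : (2 : ℂ) + 2 * (M : ℂ) ≠ 0 := by
      have h : ((2 + 2 * M : ℝ) : ℂ) ≠ 0 :=
        Complex.ofReal_ne_zero.mpr (by positivity)
      push_cast at h; exact h
    have hcont : Tendsto (fun t : ℝ => (2 : ℂ) + 2 * (M : ℂ) - (t : ℂ) * (M : ℂ))
        (nhdsWithin 0 (Set.Ioi 0)) (nhds ((2 : ℂ) + 2 * (M : ℂ))) := by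
      have hc : Continuous fun t : ℝ => (2 : ℂ) + 2 * (M : ℂ) - (t : ℂ) * (M : ℂ) := by
        continuity
      simpa using (hc.tendsto 0).mono_left nhdsWithin_le_nhds
    have hg : Tendsto (fun t : ℝ => (-2 * (M : ℂ)) / ((2 : ℂ) + 2 * (M : ℂ) - (t : ℂ) * (M : ℂ)))
        (nhdsWithin 0 (Set.Ioi 0)) (nhds ((-2 * (M : ℂ)) / ((2 : ℂ) + 2 * (M : ℂ)))) :=
      tendsto_const_nhds.div hcont h2M
    have hval : (-2 * (M : ℂ)) / ((2 : ℂ) + 2 * (M : ℂ)) = (-(M / (M + 1) : ℝ) : ℂ) := by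
      push_cast
      have hM1' : (1 : ℂ) + (M : ℂ) ≠ 0 := by rwa [add_comm]
      field_simp
      ring
    rw [hval] at hg
    refine Tendsto.congr' ?_ hg
    filter_upwards [Ioo_mem_nhdsGT_of_mem (⟨le_refl 0, one_pos⟩ : (0:ℝ) ∈ Set.Ico 0 1)]
      with t ht
    obtain ⟨ht0, ht1⟩ := ht
    have htc : (t : ℂ) ≠ 0 := Complex.ofReal_ne_zero.mpr (ne_of_gt ht0)
    have hd : (2 : ℂ) + 2 * (M : ℂ) - (t : ℂ) * (M : ℂ) ≠ 0 := by
      have h : ((2 + 2 * M - t * M : ℝ) : ℂ) ≠ 0 :=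
        Complex.ofReal_ne_zero.mpr (by nlinarith)
      push_cast at h
      exact h
    have hDeq : (3 : ℂ) - (1 - (t : ℂ)) - (1 - (t : ℂ) * (M : ℂ)) -
        (1 - (t : ℂ)) * (1 - (t : ℂ) * (M : ℂ)) =
        (t : ℂ) * ((2 : ℂ) + 2 * (M : ℂ) - (t : ℂ) * (M : ℂ)) := by ring
    rw [hDeq]
    rw [div_sub_one (mul_ne_zero htc hd), div_div, div_eq_div_iff hd (mul_ne_zero (mul_ne_zero htc hd) htc)]
    ring
end

section
/- Let H¹, H² be complex Hilbert spaces and for each M > 0 let x(M) = (x¹(M), x²(M)) ∈ H¹ × H² be vectors satisfying, for all M, N > 0, the identity ⟨x¹(M), x¹(N)⟩ + M⟨x²(M), x²(N)⟩ = ‖x¹(M)‖² + M‖x²(M)‖². Define K(M) = ‖x¹(M)‖² + M‖x²(M)‖². Then K is nondecreasing on (0, ∞), and if K(M) = K(N) for some 0 < M < N, then x(M) = x(N) and x²(M) = 0. -/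
/-- Abstract content of Proposition 3.4: monotonicity of K(M) and rigidity of equality. -/
theorem K_nondecreasing_and_rigid
    {H1 H2 : Type*} [NormedAddCommGroup H1] [InnerProductSpace ℂ H1]
    [NormedAddCommGroup H2] [InnerProductSpace ℂ H2]
    (x : ℝ → H1 × H2)
    (h : ∀ M N : ℝ, 0 < M → 0 < N →
      (inner ℂ ((x N).1) ((x M).1) : ℂ) + (M : ℂ) * (inner ℂ ((x N).2) ((x M).2) : ℂ)
        = ((‖(x M).1‖ ^ 2 + M * ‖(x M).2‖ ^ 2 : ℝ) : ℂ)) :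
    (∀ M N : ℝ, 0 < M → M ≤ N →
      ‖(x M).1‖ ^ 2 + M * ‖(x M).2‖ ^ 2 ≤ ‖(x N).1‖ ^ 2 + N * ‖(x N).2‖ ^ 2) ∧
    (∀ M N : ℝ, 0 < M → M < N →
      ‖(x M).1‖ ^ 2 + M * ‖(x M).2‖ ^ 2 = ‖(x N).1‖ ^ 2 + N * ‖(x N).2‖ ^ 2 →
      x M = x N ∧ (x M).2 = 0) := by
  have key : ∀ M N : ℝ, 0 < M → 0 < N →
      ‖(x N).1 - (x M).1‖ ^ 2 + M * ‖(x N).2 - (x M).2‖ ^ 2 + (N - M) * ‖(x N).2‖ ^ 2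
        = (‖(x N).1‖ ^ 2 + N * ‖(x N).2‖ ^ 2) - (‖(x M).1‖ ^ 2 + M * ‖(x M).2‖ ^ 2) := by
    intro M N hM hN
    have hre := congrArg Complex.re (h M N hM hN)
    simp only [Complex.add_re, Complex.mul_re, Complex.ofReal_re, Complex.ofReal_im,
      zero_mul, sub_zero] at hre
    have e1 : ‖(x N).1 - (x M).1‖ ^ 2
        = ‖(x N).1‖ ^ 2 - 2 * (RCLike.re (inner ℂ ((x N).1) ((x M).1) : ℂ)) + ‖(x M).1‖ ^ 2 :=
      @norm_sub_sq ℂ _ _ _ _ _ _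
    have e2 : ‖(x N).2 - (x M).2‖ ^ 2
        = ‖(x N).2‖ ^ 2 - 2 * (RCLike.re (inner ℂ ((x N).2) ((x M).2) : ℂ)) + ‖(x M).2‖ ^ 2 :=
      @norm_sub_sq ℂ _ _ _ _ _ _
    rw [RCLike.re_to_complex] at e1 e2
    nlinarith [hre, e1, e2]
  constructor
  · intro M N hM hMN
    have hN : 0 < N := lt_of_lt_of_le hM hMN
    have := key M N hM hN
    nlinarith [sq_nonneg ‖(x N).1 - (x M).1‖, sq_nonneg ‖(x N).2 - (x M).2‖,
      sq_nonneg ‖(x N).2‖, this]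
  · intro M N hM hMN heq
    have hN : 0 < N := hM.trans hMN
    have hk := key M N hM hN
    rw [← heq, sub_self] at hk
    have h1 : ‖(x N).1 - (x M).1‖ ^ 2 = 0 := by
      nlinarith [sq_nonneg ‖(x N).1 - (x M).1‖, sq_nonneg ‖(x N).2 - (x M).2‖,
        sq_nonneg ‖(x N).2‖]
    have h2 : ‖(x N).2 - (x M).2‖ ^ 2 = 0 := by
      nlinarith [sq_nonneg ‖(x N).1 - (x M).1‖, sq_nonneg ‖(x N).2 - (x M).2‖,
        sq_nonneg ‖(x N).2‖]
    have h3 : ‖(x N).2‖ ^ 2 = 0 := by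
      nlinarith [sq_nonneg ‖(x N).1 - (x M).1‖, sq_nonneg ‖(x N).2 - (x M).2‖,
        sq_nonneg ‖(x N).2‖]
    have e1 : (x N).1 = (x M).1 := by
      have := (pow_eq_zero_iff (n := 2) (by norm_num)).mp h1
      rw [norm_eq_zero, sub_eq_zero] at this; exact this
    have e2 : (x N).2 = (x M).2 := by
      have := (pow_eq_zero_iff (n := 2) (by norm_num)).mp h2
      rw [norm_eq_zero, sub_eq_zero] at this; exact this
    have e3 : (x N).2 = 0 := by
      have := (pow_eq_zero_iff (n := 2) (by norm_num)).mp h3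
      rwa [norm_eq_zero] at this
    exact ⟨Prod.ext e1.symm e2.symm, e2 ▸ e3⟩
end
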